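/- Let k be a field and let G = Multiplicative k be the additive group of k regarded as a multiplicative group. Equip ℤ with the module structure over the group ring ℤ[G] = MonoidAlgebra ℤ G given by the augmentation map ℤ[G] → ℤ sending every g ∈ G to 1. Then ℤ is not flat as a ℤ[G]-module. -/

import Mathlib

open MonoidAlgebra TensorProduct

set_option maxHeartbeats 1000000 in
set_option synthInstance.maxHeartbeats 400000 in
/-- Let `k` be a field and `G = Multiplicative k` its additive group written
multiplicatively. With the `ℤ[G]`-module structure on `ℤ` given by the augmentation map
`ℤ[G] → ℤ` (sending every `g ∈ G` to `1`), `ℤ` is not flat as a `ℤ[G]`-module. -/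
theorem stmt_7 (k : Type*) [Field k] :
    ¬ @Module.Flat (MonoidAlgebra ℤ (Multiplicative k)) ℤ _ _
        (Module.compHom ℤ
          ((MonoidAlgebra.lift ℤ ℤ (Multiplicative k))
            (1 : Multiplicative k →* ℤ)).toRingHom) := by
  intro hF
  set R := MonoidAlgebra ℤ (Multiplicative k) with hR
  set ε : R →+* ℤ :=
    ((MonoidAlgebra.lift ℤ ℤ (Multiplicative k)) (1 : Multiplicative k →* ℤ)).toRingHom with hε
  letI mZ : Module R ℤ := Module.compHom ℤ ε
  letI : Module R k := Module.compHom k ε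
  haveI hFlat : Module.Flat R ℤ := hF
  have hεs : ∀ (g : Multiplicative k) (a : ℤ), ε (MonoidAlgebra.single g a) = a := by
    intro g a
    show ((MonoidAlgebra.lift ℤ ℤ (Multiplicative k)) (1 : Multiplicative k →* ℤ))
        (MonoidAlgebra.single g a) = a
    rw [MonoidAlgebra.lift_single, MonoidHom.one_apply, smul_eq_mul, mul_one]
  -- the "derivation" d : R → k, sum of coefficients times group elements
  let d : R →ₗ[ℤ] k :=
    Finsupp.linearCombination ℤ (fun g : Multiplicative k => (Multiplicative.toAdd g : k))
      ∘ₗ (MonoidAlgebra.coeffLinearEquiv ℤ).toLinearMap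
  have hds : ∀ (g : Multiplicative k) (a : ℤ),
      d (MonoidAlgebra.single g a) = (a : k) * g.toAdd := by
    intro g a
    show Finsupp.linearCombination ℤ (fun g : Multiplicative k => (Multiplicative.toAdd g : k))
        (Finsupp.single g a) = (a : k) * g.toAdd
    rw [Finsupp.linearCombination_single, zsmul_eq_mul]
  have hder : ∀ x y : R, d (x * y) = ε x • d y + ε y • d x := by
    intro x y
    induction x using MonoidAlgebra.induction_linear with
    | zero => simp
    | add a b ha hb =>
        simp only [add_mul, map_add, ha, hb, add_smul, smul_add]
        abel
    | single g a =>
        induction y using MonoidAlgebra.induction_linear with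
        | zero => simp
        | add c e hc he =>
            simp only [mul_add, map_add, hc, he, add_smul, smul_add]
            abel
        | single h b =>
            rw [MonoidAlgebra.single_mul_single, hds, hds, hds, hεs, hεs]
            have : Multiplicative.toAdd (g * h) = Multiplicative.toAdd g + Multiplicative.toAdd h :=
              rfl
            rw [this]
            simp only [zsmul_eq_mul]
            push_cast
            ring
  -- the element g - 1, g = ofAdd 1
  set g : Multiplicative k := Multiplicative.ofAdd (1 : k) with hg
  set x : R := MonoidAlgebra.single g 1 - 1 with hx
  have hεx : ε x = 0 := by
    rw [hx, map_sub, hεs, map_one, sub_self]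
  -- the ideal generated by x
  set I : Ideal R := Ideal.span {x} with hI
  have hIle : ∀ y ∈ I, ε y = 0 := by
    intro y hy
    have : I ≤ RingHom.ker ε := by
      rw [hI, Ideal.span_le]
      intro z hz
      rw [Set.mem_singleton_iff] at hz
      rw [SetLike.mem_coe, RingHom.mem_ker, hz, hεx]
    exact RingHom.mem_ker.mp (this hy)
  have hdlin : ∀ (r : R) (y : I), d (r * (y : R)) = ε r • d (y : R) := by
    intro r y
    rw [hder, hIle (y : R) y.2, zero_smul, add_zero]
  -- the bilinear map I × ℤ → k
  let B : I →ₗ[R] ℤ →ₗ[R] k :=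
    { toFun := fun y =>
        { toFun := fun n => n • d (y : R)
          map_add' := fun m n => by simp [add_smul]
          map_smul' := fun r n => by
            show (ε r * n) • d (y : R) = ε r • (n • d (y : R))
            rw [mul_smul] }
      map_add' := fun y z => by
        ext n; simp [smul_add]
      map_smul' := fun r y => by
        ext n
        show n • d (r * (y : R)) = ε r • (n • d (y : R))
        rw [hdlin, smul_comm] }
  let ψ : I ⊗[R] ℤ →ₗ[R] k := TensorProduct.lift B
  have hmem : x ∈ I := by rw [hI]; exact Ideal.subset_span rfl
  set t : I ⊗[R] ℤ := (⟨x, hmem⟩ : I) ⊗ₜ[R] (1 : ℤ) with ht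
  have hfg : I.FG := ⟨{x}, by rw [hI]; simp⟩
  have hinj : Function.Injective (TensorProduct.lift ((LinearMap.lsmul R ℤ).comp I.subtype)) := by
    have h := hFlat.out I hfg
    have hc : TensorProduct.lift ((LinearMap.lsmul R ℤ).comp I.subtype) =
        (TensorProduct.lid R ℤ).toLinearMap ∘ₗ I.subtype.rTensor ℤ := by
      ext a b; simp
    rw [hc]; exact (TensorProduct.lid R ℤ).injective.comp h
  have ht0 : t = 0 := by
    apply hinj
    rw [map_zero, ht, TensorProduct.lift.tmul]
    show (⟨x, hmem⟩ : I).1 • (1 : ℤ) = 0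
    show ε x * 1 = 0
    rw [hεx, zero_mul]
  have hψ0 : ψ t = 0 := by rw [ht0, map_zero]
  have hψ1 : ψ t = 1 := by
    rw [ht]
    show (1 : ℤ) • d x = 1
    rw [one_smul, hx, map_sub, hds, MonoidAlgebra.one_def, hds]
    simp [hg]
  rw [hψ1] at hψ0
  exact one_ne_zero hψ0
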